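/- Let ν > 1 and η > 0, set c := ∑_{n ∈ ℤ} (1+n²)^{−ν/2}, and define χ_η : [0,∞) → [0,∞) by χ_η(y) = η·y/log(y+2). Let ξ : [0,∞) → [0,∞) be an inverse of χ_η, i.e. χ_η(ξ(x)) = x and ξ(χ_η(y)) = y for all x, y ≥ 0. For r > 0 let N(r) := Nat.card {j ∈ ℕ | c·exp(−ξ(j)/2) > r}. Then N(r) is finite for each small r > 0 and N(r) = 2·η·(−log r)·(log(−log r))^{−1}·(1 + o(1)) as r → 0⁺; equivalently, lim_{r → 0⁺} N(r)·log(−log r)/(2·η·(−log r)) = 1. -/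

import Mathlib

open Filter


theorem aux_summable (ν : ℝ) (hν : 1 < ν) :
    Summable (fun n : ℤ => (1 + (n : ℝ) ^ 2) ^ (-(ν / 2))) := by
  apply Summable.of_norm_bounded_eventually (g := fun n : ℤ => |(n : ℝ)| ^ (-ν))
    (Real.summable_abs_int_rpow hν)
  have : {n : ℤ | ¬ ‖(1 + (n : ℝ) ^ 2) ^ (-(ν / 2))‖ ≤ |(n : ℝ)| ^ (-ν)} ⊆ {0} := by
    intro n hn
    simp only [Set.mem_setOf_eq] at hn
    by_contra h0
    have hne : n ≠ 0 := by simpa using h0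
    apply hn
    have hn1 : (1:ℝ) ≤ |(n:ℝ)| := by
      have h1 : (1:ℤ) ≤ |n| := Int.one_le_abs hne
      calc (1:ℝ) ≤ ((|n| : ℤ) : ℝ) := by exact_mod_cast h1
        _ = |(n:ℝ)| := by push_cast; ring
    have hsqpos : (0:ℝ) < (n:ℝ)^2 := by nlinarith [sq_abs ((n:ℝ)), sq_nonneg (|(n:ℝ)| - 1)]
    have hsq : |(n:ℝ)| ^ (2:ℝ) = (n:ℝ)^2 := by rw [Real.rpow_two, sq_abs]
    rw [Real.norm_eq_abs, abs_of_nonneg (Real.rpow_nonneg (by positivity) _)]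
    calc (1 + (n : ℝ) ^ 2) ^ (-(ν / 2)) ≤ ((n:ℝ)^2) ^ (-(ν / 2)) := by
          apply Real.rpow_le_rpow_of_nonpos hsqpos (by linarith) (by linarith)
      _ = (|(n:ℝ)| ^ (2:ℝ)) ^ (-(ν/2)) := by rw [hsq]
      _ = |(n:ℝ)| ^ (-ν) := by
          rw [← Real.rpow_mul (abs_nonneg _)]; congr 1; ring
  exact Set.Finite.subset (Set.finite_singleton 0) this

theorem aux_chi_mono (η : ℝ) (hη : 0 < η) (ξ : ℝ → ℝ)
    (hξ₂ : ∀ y : ℝ, 0 ≤ y → ξ (η * y / Real.log (y + 2)) = y) :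
    StrictMonoOn (fun y => η * y / Real.log (y + 2)) (Set.Ici 0) := by
  set χ : ℝ → ℝ := fun y => η * y / Real.log (y + 2) with hχ
  have hlogpos : ∀ y : ℝ, 0 ≤ y → 0 < Real.log (y + 2) := fun y hy =>
    Real.log_pos (by linarith)
  have hinj : Set.InjOn χ (Set.Ici 0) := by
    intro a ha b hb h
    have ha' := hξ₂ a ha
    have hb' := hξ₂ b hb
    rw [← ha', ← hb']
    exact congrArg ξ h
  intro a ha b hb hab
  have h0b : (0:ℝ) ≤ b := le_trans ha hab.le
  have hco : ContinuousOn χ (Set.Icc 0 b) := by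
    apply ContinuousOn.div
    · exact (continuous_const.mul continuous_id).continuousOn
    · apply Real.continuousOn_log.comp (by fun_prop)
      intro y hy
      simp only [Set.mem_compl_iff, Set.mem_singleton_iff]
      have := hy.1; intro h; linarith [show y + 2 = 0 from h]
    · intro y hy
      exact (hlogpos y hy.1).ne'
  have hfab : χ 0 ≤ χ b := by
    have h0 : χ 0 = 0 := by simp [hχ]
    rw [h0]
    exact div_nonneg (by positivity) (hlogpos b h0b).le
  have hm := ContinuousOn.strictMonoOn_of_injOn_Icc h0b hfab hco
    (hinj.mono (Set.Icc_subset_Ici_self))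
  exact hm ⟨ha, hab.le⟩ ⟨h0b, le_rfl⟩ hab

theorem aux_count (η c : ℝ) (hη : 0 < η) (hc : 0 < c) (ξ : ℝ → ℝ)
    (hξ₀ : ∀ x : ℝ, 0 ≤ x → 0 ≤ ξ x)
    (hξ₁ : ∀ x : ℝ, 0 ≤ x → η * ξ x / Real.log (ξ x + 2) = x)
    (hξ₂ : ∀ y : ℝ, 0 ≤ y → ξ (η * y / Real.log (y + 2)) = y)
    (r : ℝ) (hr : 0 < r) (hrc : r < c) :
    {j : ℕ | c * Real.exp (-ξ (j : ℝ) / 2) > r} =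
      ↑(Finset.range ⌈η * (2 * (Real.log c - Real.log r)) /
        Real.log (2 * (Real.log c - Real.log r) + 2)⌉₊) := by
  have hmono := aux_chi_mono η hη ξ hξ₂
  have ha0 : 0 ≤ 2 * (Real.log c - Real.log r) := by
    have := Real.log_lt_log hr hrc
    linarith
  set a : ℝ := 2 * (Real.log c - Real.log r) with hadef
  ext j
  simp only [Set.mem_setOf_eq, Finset.coe_range, Set.mem_Iio, Nat.lt_ceil, gt_iff_lt]
  have hj0 : (0:ℝ) ≤ (j:ℝ) := Nat.cast_nonneg j
  have key : r < c * Real.exp (-ξ (j:ℝ) / 2) ↔ ξ (j:ℝ) < a := by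
    rw [← Real.log_lt_log_iff hr (by positivity), Real.log_mul hc.ne' (Real.exp_ne_zero _),
      Real.log_exp]
    constructor <;> intro h <;> [skip; skip] <;> rw [hadef] at * <;> linarith
  rw [key]
  constructor
  · intro h
    have := hmono (Set.mem_Ici.mpr (hξ₀ _ hj0)) (Set.mem_Ici.mpr ha0) h
    beta_reduce at this
    rwa [hξ₁ _ hj0] at this
  · intro h
    by_contra hcon
    push_neg at hcon
    have := hmono.monotoneOn (Set.mem_Ici.mpr ha0) (Set.mem_Ici.mpr (hξ₀ _ hj0)) hcon
    beta_reduce at this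
    rw [hξ₁ _ hj0] at this
    exact absurd h (not_lt.mpr this)

theorem aux_tendsto (η k : ℝ) (hη : 0 < η) :
    Tendsto (fun L : ℝ => (⌈η * (2 * (k + L)) / Real.log (2 * (k + L) + 2)⌉₊ : ℝ)
      * Real.log L / (2 * η * L)) atTop (nhds 1) := by
  set φ : ℝ → ℝ := fun L => η * (2 * (k + L)) / Real.log (2 * (k + L) + 2) with hφ
  set D : ℝ → ℝ := fun L => Real.log (2 * (k + L) + 2) with hD
  set E : ℝ → ℝ := fun L => Real.log (2 + (2 * k + 2) / L) with hE
  -- log L / (2ηL) → 0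
  have h2 : Tendsto (fun L : ℝ => Real.log L / (2 * η * L)) atTop (nhds 0) := by
    have h := Real.isLittleO_log_id_atTop.tendsto_div_nhds_zero
    have h' := h.const_mul ((2 * η)⁻¹)
    rw [mul_zero] at h'
    apply h'.congr
    intro L
    simp only [id]
    ring
  -- E → log 2
  have hEt : Tendsto E atTop (nhds (Real.log 2)) := by
    have h1 : Tendsto (fun L : ℝ => 2 + (2 * k + 2) / L) atTop (nhds 2) := by
      have := (tendsto_const_nhds (x := (2 * k + 2)) (f := atTop (α := ℝ))).div_atTop tendsto_id
      simpa using (tendsto_const_nhds (x := (2:ℝ))).add this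
    exact ((Real.continuousAt_log (by norm_num)).tendsto).comp h1
  have hElog : Tendsto (fun L => E L / Real.log L) atTop (nhds 0) :=
    hEt.div_atTop Real.tendsto_log_atTop
  -- eventually facts
  have hev : ∀ᶠ L : ℝ in atTop, (1:ℝ) < L ∧ |2 * k + 2| < L ∧ -k + 1 ≤ L := by
    filter_upwards [eventually_gt_atTop (1:ℝ), eventually_gt_atTop (|2 * k + 2|),
      eventually_ge_atTop (-k + 1)] with L h1 h2 h3
    exact ⟨h1, h2, h3⟩
  -- log L / D → 1
  have hratio : Tendsto (fun L => Real.log L / D L) atTop (nhds 1) := by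
    have hinv : Tendsto (fun L => D L / Real.log L) atTop (nhds 1) := by
      have ht : Tendsto (fun L => 1 + E L / Real.log L) atTop (nhds (1 + 0)) :=
        tendsto_const_nhds.add hElog
      rw [add_zero] at ht
      apply ht.congr'
      filter_upwards [hev] with L ⟨h1, habs, hk⟩
      have hL0 : (0:ℝ) < L := lt_trans one_pos h1
      have hlogL : 0 < Real.log L := Real.log_pos h1
      have hq : (0:ℝ) < 2 + (2 * k + 2) / L := by
        have : |(2 * k + 2) / L| < 1 := by
          rw [abs_div, abs_of_pos hL0, div_lt_one hL0]
          exact habs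
        have := abs_lt.mp this
        linarith [this.1]
      have hsplit : D L = Real.log L + E L := by
        have harg : 2 * (k + L) + 2 = L * (2 + (2 * k + 2) / L) := by
          field_simp
          ring
        rw [hD, hE]
        simp only
        rw [harg, Real.log_mul hL0.ne' hq.ne']
      rw [hsplit]
      field_simp
    have := hinv.inv₀ one_ne_zero
    rw [inv_one] at this
    apply this.congr
    intro L
    rw [inv_div]
  -- (k+L)/L → 1
  have hfrac : Tendsto (fun L : ℝ => (k + L) / L) atTop (nhds 1) := by
    have h0 : Tendsto (fun L : ℝ => k / L + 1) atTop (nhds (0 + 1)) :=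
      ((tendsto_const_nhds (x := k)).div_atTop tendsto_id).add tendsto_const_nhds
    rw [zero_add] at h0
    apply h0.congr'
    filter_upwards [eventually_gt_atTop (0:ℝ)] with L hL
    field_simp
  -- lower bound tendsto
  have hlb : Tendsto (fun L => φ L * (Real.log L / (2 * η * L))) atTop (nhds 1) := by
    have hm := hfrac.mul hratio
    rw [one_mul] at hm
    apply hm.congr'
    filter_upwards [hev] with L ⟨h1, habs, hk⟩
    have hL0 : (0:ℝ) < L := lt_trans one_pos h1
    have hDpos : 0 < D L := Real.log_pos (by nlinarith)
    simp only [hφ, hD]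
    field_simp
  have hub : Tendsto (fun L => (φ L + 1) * (Real.log L / (2 * η * L))) atTop (nhds 1) := by
    have := hlb.add h2
    rw [add_zero] at this
    apply this.congr
    intro L
    ring
  apply tendsto_of_tendsto_of_tendsto_of_le_of_le' hlb hub
  · filter_upwards [hev] with L ⟨h1, habs, hk⟩
    have hL0 : (0:ℝ) < L := lt_trans one_pos h1
    have hw : 0 ≤ Real.log L / (2 * η * L) :=
      div_nonneg (Real.log_nonneg h1.le) (by positivity)
    rw [mul_div_assoc]
    exact mul_le_mul_of_nonneg_right (Nat.le_ceil _) hw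
  · filter_upwards [hev] with L ⟨h1, habs, hk⟩
    have hL0 : (0:ℝ) < L := lt_trans one_pos h1
    have hw : 0 ≤ Real.log L / (2 * η * L) :=
      div_nonneg (Real.log_nonneg h1.le) (by positivity)
    have hDpos : 0 < D L := Real.log_pos (by nlinarith)
    have hφ0 : 0 ≤ φ L := by
      apply div_nonneg _ hDpos.le
      nlinarith
    rw [mul_div_assoc]
    exact mul_le_mul_of_nonneg_right (Nat.ceil_lt_add_one hφ0).le hw

/-- Eigenvalue counting asymptotics for weights `c·exp(−ξ(j)/2)` where `ξ` is
the inverse of `χ_η(y) = η·y/log(y+2)`: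
`N(r) = 2η·(−log r)·(log(−log r))⁻¹·(1+o(1))` as `r → 0⁺`. -/
theorem stmt_14 (ν η : ℝ) (hν : 1 < ν) (hη : 0 < η) (ξ : ℝ → ℝ)
    (hξ₀ : ∀ x : ℝ, 0 ≤ x → 0 ≤ ξ x)
    (hξ₁ : ∀ x : ℝ, 0 ≤ x → η * ξ x / Real.log (ξ x + 2) = x)
    (hξ₂ : ∀ y : ℝ, 0 ≤ y → ξ (η * y / Real.log (y + 2)) = y) :
    (∀ᶠ r : ℝ in nhdsWithin 0 (Set.Ioi 0),
      {j : ℕ | (∑' n : ℤ, (1 + (n : ℝ) ^ 2) ^ (-(ν / 2))) *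
        Real.exp (-ξ (j : ℝ) / 2) > r}.Finite) ∧
    Tendsto
      (fun r : ℝ =>
        (Nat.card {j : ℕ | (∑' n : ℤ, (1 + (n : ℝ) ^ 2) ^ (-(ν / 2))) *
            Real.exp (-ξ (j : ℝ) / 2) > r} : ℝ) *
          Real.log (-Real.log r) / (2 * η * (-Real.log r)))
      (nhdsWithin 0 (Set.Ioi 0)) (nhds 1) := by
  set c : ℝ := ∑' n : ℤ, (1 + (n : ℝ) ^ 2) ^ (-(ν / 2)) with hcdef
  have hsum := aux_summable ν hν
  have hc : 0 < c :=
    Summable.tsum_pos hsum (fun n => Real.rpow_nonneg (by positivity) _) 0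
      (Real.rpow_pos_of_pos (by norm_num) _)
  have hIoo : Set.Ioo (0:ℝ) c ∈ nhdsWithin 0 (Set.Ioi 0) :=
    Ioo_mem_nhdsGT_of_mem ⟨le_rfl, hc⟩
  constructor
  · filter_upwards [hIoo] with r hr
    rw [aux_count η c hη hc ξ hξ₀ hξ₁ hξ₂ r hr.1 hr.2]
    exact (Finset.range _).finite_toSet
  · have hneg : Tendsto (fun r : ℝ => -Real.log r) (nhdsWithin 0 (Set.Ioi 0)) atTop :=
      tendsto_neg_atBot_atTop.comp Real.tendsto_log_nhdsGT_zero
    have hmain := (aux_tendsto η (Real.log c) hη).comp hneg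
    apply hmain.congr'
    filter_upwards [hIoo] with r hr
    have hcard : (Nat.card {j : ℕ | c * Real.exp (-ξ (j:ℝ) / 2) > r} : ℕ) =
        ⌈η * (2 * (Real.log c - Real.log r)) /
          Real.log (2 * (Real.log c - Real.log r) + 2)⌉₊ := by
      rw [aux_count η c hη hc ξ hξ₀ hξ₁ hξ₂ r hr.1 hr.2]
      simp
    have hsub : Real.log c - Real.log r = Real.log c + -Real.log r := by ring
    simp only [Function.comp_apply]
    rw [hcard, hsub]
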